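/- Let (L₁, …, L_h; w₁, …, w_h) be a vertex hierarchy of height h on the weighted graph G = (V, w₁). Then for every vertex v ∈ V and every ancestor u ∈ Anc(v): d(v,u) < ⊤ and d(v,u) ≥ dist_G(v,u); in particular v and u are connected in G. -/

import Mathlib

namespace ISLabel

variable {V : Type*}

/-- Two vertices are adjacent in the weighted graph `w` when they are distinct and
joined by an edge of finite weight. -/
def Adj (w : V → V → ℕ∞) (u v : V) : Prop := u ≠ v ∧ w u v < ⊤

/-- `p` is a walk from `u` to `v` in the weighted graph `w`: a nonempty list of
vertices starting at `u`, ending at `v`, with consecutive vertices adjacent. -/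
def IsWalk (w : V → V → ℕ∞) (u v : V) (p : List V) : Prop :=
  p ≠ [] ∧ p.head? = some u ∧ p.getLast? = some v ∧ p.Chain' (Adj w)

/-- The length of a list of vertices: the sum of `f` over consecutive pairs. -/
def pathLen (f : V → V → ℕ∞) (p : List V) : ℕ∞ :=
  ((p.zip p.tail).map fun e => f e.1 e.2).sum

/-- The distance from `u` to `v` in `w`: the infimum of the lengths of all walks
from `u` to `v` (`⊤` if there is no such walk). -/
noncomputable def wdist (w : V → V → ℕ∞) (u v : V) : ℕ∞ :=
  ⨅ p : {p : List V // IsWalk w u v p}, pathLen w p.1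

/-- `I` is an independent set in `w`. -/
def IsIndep (w : V → V → ℕ∞) (I : Set V) : Prop :=
  ∀ u ∈ I, ∀ v ∈ I, ¬ Adj w u v

/-- `w` is a weighted undirected graph: symmetric, and every off-diagonal value is
either `⊤` (no edge) or a weight `≥ 1`. -/
def IsWGraph (w : V → V → ℕ∞) : Prop :=
  (∀ u v, w u v = w v u) ∧ ∀ u v, u ≠ v → 1 ≤ w u v

/-- `w` is supported on `S`: all weights touching a vertex outside `S` are `⊤`. -/
def SupportedOn (w : V → V → ℕ∞) (S : Set V) : Prop :=
  ∀ u v, u ∉ S ∨ v ∉ S → w u v = ⊤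

/-- `VsetOf L i` is the vertex set `V_i = V ∖ (L₁ ∪ … ∪ L_{i-1})`. -/
def VsetOf (L : ℕ → Set V) (i : ℕ) : Set V := {v | ∀ j, 1 ≤ j → j < i → v ∉ L j}

/-- A vertex hierarchy of height `h ≥ 1` on the weighted graph `w 1`:
pairwise disjoint independent levels `L 1, …, L h` covering `V`, and graphs
`w i` supported on `V_i` obtained by the augmenting-edge construction. -/
structure VertexHierarchy (V : Type*) (h : ℕ) where
  L : ℕ → Set V
  w : ℕ → V → V → ℕ∞
  h_pos : 1 ≤ h
  wgraph : ∀ i, 1 ≤ i → i ≤ h → IsWGraph (w i)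
  disj : ∀ i j, 1 ≤ i → i ≤ h → 1 ≤ j → j ≤ h → i ≠ j → ∀ v, v ∈ L i → v ∉ L j
  cover : ∀ v : V, ∃ i, 1 ≤ i ∧ i ≤ h ∧ v ∈ L i
  supported : ∀ i, 1 ≤ i → i ≤ h → SupportedOn (w i) (VsetOf L i)
  aug : ∀ i, 2 ≤ i → i ≤ h → ∀ u v : V, u ≠ v → u ∈ VsetOf L i → v ∈ VsetOf L i →
    w i u v = min (w (i - 1) u v) (⨅ x ∈ L (i - 1), w (i - 1) u x + w (i - 1) x v)
  indep : ∀ i, 1 ≤ i → i ≤ h → IsIndep (w i) (L i)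

/-- The level `ℓ(v)`: the unique `i` with `1 ≤ i ≤ h` and `v ∈ L i`. -/
noncomputable def level {h : ℕ} (H : VertexHierarchy V h) (v : V) : ℕ :=
  sInf {i | 1 ≤ i ∧ i ≤ h ∧ v ∈ H.L i}

/-- One step of an ascending sequence: go to a strictly higher-level vertex that is
adjacent in the graph at the current vertex's level. -/
def AscStep {h : ℕ} (H : VertexHierarchy V h) (a b : V) : Prop :=
  level H a < level H b ∧ Adj (H.w (level H a)) a b

/-- `p` is an ascending sequence from `v` to `u`. -/
def IsAscending {h : ℕ} (H : VertexHierarchy V h) (v u : V) (p : List V) : Prop :=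
  p ≠ [] ∧ p.head? = some v ∧ p.getLast? = some u ∧ p.Chain' (AscStep H)

/-- The set of ancestors of `v`. -/
def Anc {h : ℕ} (H : VertexHierarchy V h) (v : V) : Set V :=
  {u | ∃ p, IsAscending H v u p}

/-- `d(v,u)`: the infimum of the lengths of ascending sequences from `v` to `u`,
where each step `a → b` costs `w (ℓ(a)) a b`; `⊤` if `u` is not an ancestor of `v`. -/
noncomputable def ancDist {h : ℕ} (H : VertexHierarchy V h) (v u : V) : ℕ∞ :=
  ⨅ p : {p : List V // IsAscending H v u p},
    pathLen (fun a b => H.w (level H a) a b) p.1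

lemma exists_eq_iInf' {ι : Sort*} [Nonempty ι] (f : ι → ℕ∞) : ∃ i, f i = ⨅ j, f j := by
  obtain ⟨m, hm, hmin⟩ := wellFounded_lt.has_min (Set.range f) (Set.range_nonempty f)
  obtain ⟨i, rfl⟩ := hm
  exact ⟨i, le_antisymm (le_iInf fun j => le_of_not_gt (hmin _ (Set.mem_range_self j)))
    (iInf_le _ i)⟩

lemma pathLen_cons_cons (f : V → V → ℕ∞) (x y : V) (l : List V) :
    pathLen f (x :: y :: l) = f x y + pathLen f (y :: l) := by
  simp [pathLen]

lemma pathLen_singleton (f : V → V → ℕ∞) (x : V) : pathLen f [x] = 0 := by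
  simp [pathLen]

lemma isWalk_singleton (w : V → V → ℕ∞) (a : V) : IsWalk w a a [a] :=
  ⟨by simp, by simp, by simp, List.isChain_singleton a⟩

lemma wdist_self (w : V → V → ℕ∞) (a : V) : wdist w a a = 0 :=
  le_antisymm (le_trans (iInf_le _ ⟨[a], isWalk_singleton w a⟩)
    (by simp [pathLen_singleton])) zero_le

lemma wdist_le_weight (w : V → V → ℕ∞) (u v : V) : wdist w u v ≤ w u v := by
  rcases eq_or_ne u v with rfl | huv
  · simp [wdist_self]
  rcases eq_or_lt_of_le (le_top : w u v ≤ ⊤) with h | h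
  · simp [h]
  · have hw : IsWalk w u v [u, v] :=
      ⟨by simp, by simp, by simp, List.isChain_pair.mpr ⟨huv, h⟩⟩
    calc wdist w u v ≤ pathLen w [u, v] :=
      iInf_le (fun p : {p : List V // IsWalk w u v p} => pathLen w p.1) ⟨_, hw⟩
      _ = w u v := by simp [pathLen]

lemma walk_append {w : V → V → ℕ∞} {b c : V} {q : List V} (hq : IsWalk w b c q) :
    ∀ (p : List V) (a : V), IsWalk w a b p →
      IsWalk w a c (p ++ q.tail) ∧
        pathLen w (p ++ q.tail) = pathLen w p + pathLen w q := by
  intro p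
  induction p with
  | nil => intro a hp; exact absurd rfl hp.1
  | cons x l ih =>
    intro a hp
    obtain ⟨-, hhead, hlast, hchain⟩ := hp
    have hax : x = a := by simpa using hhead
    subst hax
    cases l with
    | nil =>
      have hba : x = b := by simpa using hlast
      subst hba
      obtain ⟨hq0, hqh, hql, hqc⟩ := hq
      obtain ⟨z, q', rfl⟩ := List.exists_cons_of_ne_nil hq0
      have hz : z = x := by simpa using hqh
      subst hz
      refine ⟨⟨by simp, by simp, by simpa using hql, by simpa using hqc⟩, ?_⟩
      simp [pathLen_singleton]
    | cons y l' =>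
      rw [List.Chain', List.isChain_cons_cons] at hchain
      have hwy : IsWalk w y b (y :: l') :=
        ⟨by simp, by simp, by simpa [List.getLast?_cons_cons] using hlast, hchain.2⟩
      obtain ⟨hw', hlen'⟩ := ih y hwy
      have hrw : (x :: y :: l') ++ q.tail = x :: (y :: (l' ++ q.tail)) := by simp
      constructor
      · refine ⟨by simp, by simp, ?_, ?_⟩
        · rw [hrw, List.getLast?_cons_cons]
          simpa using hw'.2.2.1
        · rw [hrw, List.Chain', List.isChain_cons_cons]
          exact ⟨hchain.1, by simpa [List.Chain'] using hw'.2.2.2⟩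
      · rw [hrw, pathLen_cons_cons]
        have : pathLen w (y :: (l' ++ q.tail)) = pathLen w (y :: l') + pathLen w q := by
          simpa using hlen'
        rw [this, pathLen_cons_cons, add_assoc]

lemma wdist_triangle (w : V → V → ℕ∞) (a b c : V) :
    wdist w a c ≤ wdist w a b + wdist w b c := by
  rcases eq_or_ne (wdist w a b) ⊤ with h | h
  · simp [h]
  rcases eq_or_ne (wdist w b c) ⊤ with h' | h'
  · simp [h']
  have hne : Nonempty {p // IsWalk w a b p} := by
    by_contra hn
    rw [not_nonempty_iff] at hn
    exact h (by rw [wdist, iInf_of_empty])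
  have hne' : Nonempty {p // IsWalk w b c p} := by
    by_contra hn
    rw [not_nonempty_iff] at hn
    exact h' (by rw [wdist, iInf_of_empty])
  obtain ⟨p, hp⟩ := exists_eq_iInf' (fun p : {p // IsWalk w a b p} => pathLen w p.1)
  obtain ⟨q, hq⟩ := exists_eq_iInf' (fun q : {q // IsWalk w b c q} => pathLen w q.1)
  obtain ⟨hwalk, hlen⟩ := walk_append q.2 p.1 a p.2
  calc wdist w a c ≤ pathLen w (p.1 ++ q.1.tail) :=
      iInf_le (fun p : {p : List V // IsWalk w a c p} => pathLen w p.1) ⟨_, hwalk⟩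
    _ = pathLen w p.1 + pathLen w q.1 := hlen
    _ = wdist w a b + wdist w b c := by rw [hp, hq]; rfl

lemma level_spec {h : ℕ} (H : VertexHierarchy V h) (v : V) :
    1 ≤ level H v ∧ level H v ≤ h ∧ v ∈ H.L (level H v) := by
  have hne : {i | 1 ≤ i ∧ i ≤ h ∧ v ∈ H.L i}.Nonempty := by
    obtain ⟨i, h1, h2, h3⟩ := H.cover v
    exact ⟨i, h1, h2, h3⟩
  exact Nat.sInf_mem hne

lemma wdist_one_le {h : ℕ} (H : VertexHierarchy V h) :
    ∀ i, 1 ≤ i → i ≤ h → ∀ u v, wdist (H.w 1) u v ≤ H.w i u v := by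
  intro i
  induction i with
  | zero => intro h1; omega
  | succ n ih =>
    intro h1 hh u v
    rcases Nat.lt_or_ge n 1 with hn | hn
    · have : n = 0 := by omega
      subst this
      exact wdist_le_weight _ u v
    · rcases eq_or_ne u v with rfl | huv
      · simp [wdist_self]
      by_cases hmem : u ∈ VsetOf H.L (n + 1) ∧ v ∈ VsetOf H.L (n + 1)
      · have haug := H.aug (n + 1) (by omega) hh u v huv hmem.1 hmem.2
        rw [haug]
        simp only [Nat.add_sub_cancel]
        refine le_min (ih hn (by omega) u v) (le_iInf fun x => le_iInf fun _ => ?_)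
        calc wdist (H.w 1) u v ≤ wdist (H.w 1) u x + wdist (H.w 1) x v :=
              wdist_triangle _ u x v
          _ ≤ H.w n u x + H.w n x v :=
              add_le_add (ih hn (by omega) u x) (ih hn (by omega) x v)
      · have : H.w (n + 1) u v = ⊤ := H.supported (n + 1) (by omega) hh u v (by tauto)
        simp [this]

lemma ascending_bound {h : ℕ} (H : VertexHierarchy V h) :
    ∀ (p : List V) (v u : V), IsAscending H v u p →
      wdist (H.w 1) v u ≤ pathLen (fun a b => H.w (level H a) a b) p ∧
        pathLen (fun a b => H.w (level H a) a b) p < ⊤ := by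
  intro p
  induction p with
  | nil => intro v u hp; exact absurd rfl hp.1
  | cons x l ih =>
    intro v u hp
    obtain ⟨-, hh, hl, hc⟩ := hp
    have hxv : x = v := by simpa using hh
    subst hxv
    cases l with
    | nil =>
      have hvu : x = u := by simpa using hl
      subst hvu
      simp [wdist_self, pathLen_singleton]
    | cons y l' =>
      rw [List.Chain', List.isChain_cons_cons] at hc
      obtain ⟨hlt, hne, hfin⟩ := hc.1
      have hasc : IsAscending H y u (y :: l') :=
        ⟨by simp, by simp, by simpa [List.getLast?_cons_cons] using hl, hc.2⟩
      obtain ⟨h1, h2⟩ := ih y u hasc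
      have hlv := level_spec H x
      have hstep : wdist (H.w 1) x y ≤ H.w (level H x) x y :=
        wdist_one_le H (level H x) hlv.1 hlv.2.1 x y
      rw [pathLen_cons_cons]
      constructor
      · calc wdist (H.w 1) x u ≤ wdist (H.w 1) x y + wdist (H.w 1) y u :=
            wdist_triangle _ x y u
          _ ≤ H.w (level H x) x y + pathLen (fun a b => H.w (level H a) a b) (y :: l') :=
            add_le_add hstep h1
      · exact ENat.add_lt_top.mpr ⟨hfin, h2⟩

/-- label distances to ancestors are finite upper bounds on the
true distances; in particular a vertex is connected to each of its ancestors. -/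
theorem ancDist_finite_ge_dist [Fintype V] {h : ℕ} (H : VertexHierarchy V h) :
    ∀ v : V, ∀ u ∈ Anc H v,
      ancDist H v u < ⊤ ∧ wdist (H.w 1) v u ≤ ancDist H v u ∧
        wdist (H.w 1) v u < ⊤ := by
  intro v u hu
  obtain ⟨p, hp⟩ := hu
  have hb := ascending_bound H p v u hp
  have h1 : ancDist H v u < ⊤ := lt_of_le_of_lt (iInf_le _ ⟨p, hp⟩) hb.2
  have h2 : wdist (H.w 1) v u ≤ ancDist H v u :=
    le_iInf fun q => (ascending_bound H q.1 v u q.2).1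
  exact ⟨h1, h2, lt_of_le_of_lt h2 h1⟩

end ISLabel
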